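/- Given a CNF formula φ with variables x₁,…,xₙ and clauses C₁,…,C_k, construct the graph G with vertices {x_i}, {x̄_i}, and {C_j}, with edges x_i x̄_i for each i, and an edge between each clause vertex C_j and each literal vertex it contains. Then φ is satisfiable if and only if G has a maximal independent set disjoint from the set of clause vertices. -/

import Mathlib

/-- `S` is a maximal independent set. -/
def IsMaxIndep {V : Type*} (adj : V → V → Prop) (S : Set V) : Prop :=
  (∀ u ∈ S, ∀ v ∈ S, ¬ adj u v) ∧ ∀ v, v ∉ S → ∃ u ∈ S, adj u v

/-- The graph associated with a CNF formula with `n` variables and `k` clauses, where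
clause `j` has positive literals `P j` and negative literals `N j`. Vertices:
`Sum.inl (Sum.inl i)` is the literal `xᵢ`, `Sum.inl (Sum.inr i)` is the literal `¬xᵢ`,
`Sum.inr j` is clause `j`. Each pair of contradicting literals is adjacent, and each
clause is adjacent exactly to the literals it contains. -/
def cnfG (n k : ℕ) (P N : Fin k → Set (Fin n)) :
    SimpleGraph ((Fin n ⊕ Fin n) ⊕ Fin k) where
  Adj a b :=
    match a, b with
    | Sum.inl (Sum.inl i), Sum.inl (Sum.inr j) => i = j
    | Sum.inl (Sum.inr i), Sum.inl (Sum.inl j) => i = j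
    | Sum.inl (Sum.inl i), Sum.inr j => i ∈ P j
    | Sum.inr j, Sum.inl (Sum.inl i) => i ∈ P j
    | Sum.inl (Sum.inr i), Sum.inr j => i ∈ N j
    | Sum.inr j, Sum.inl (Sum.inr i) => i ∈ N j
    | _, _ => False
  symm := by
    constructor
    rintro ((i | i) | j) ((i' | i') | j') h <;>
      first
        | exact h
        | exact h.symm
  loopless := by
    constructor
    rintro ((i | i) | j) h <;> exact h

/-- The CNF formula is satisfiable iff the associated graph has a maximal independent
set disjoint from the set of clause vertices. -/
theorem stmt18 (n k : ℕ) (P N : Fin k → Set (Fin n)) :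
    (∃ a : Fin n → Bool, ∀ j : Fin k,
      (∃ i ∈ P j, a i = true) ∨ (∃ i ∈ N j, a i = false)) ↔
    (∃ S : Set ((Fin n ⊕ Fin n) ⊕ Fin k), IsMaxIndep (cnfG n k P N).Adj S ∧
      ∀ j : Fin k, Sum.inr j ∉ S) := by
  constructor
  · rintro ⟨a, ha⟩
    refine ⟨{v | (∃ i, v = Sum.inl (Sum.inl i) ∧ a i = true) ∨
        (∃ i, v = Sum.inl (Sum.inr i) ∧ a i = false)}, ⟨?_, ?_⟩, ?_⟩
    · rintro u (⟨i, rfl, hi⟩ | ⟨i, rfl, hi⟩) v (⟨i', rfl, hi'⟩ | ⟨i', rfl, hi'⟩) hadj <;>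
        simp only [cnfG] at hadj <;> try exact hadj
      · subst hadj; simp [hi] at hi'
      · subst hadj; simp [hi] at hi'
    · rintro ((i | i) | j) hv
      · refine ⟨Sum.inl (Sum.inr i), Or.inr ⟨i, rfl, ?_⟩, rfl⟩
        cases h : a i
        · rfl
        · exact absurd (Or.inl ⟨i, rfl, h⟩) hv
      · refine ⟨Sum.inl (Sum.inl i), Or.inl ⟨i, rfl, ?_⟩, rfl⟩
        cases h : a i
        · exact absurd (Or.inr ⟨i, rfl, h⟩) hv
        · rfl
      · rcases ha j with ⟨i, hiP, hi⟩ | ⟨i, hiN, hi⟩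
        · exact ⟨Sum.inl (Sum.inl i), Or.inl ⟨i, rfl, hi⟩, hiP⟩
        · exact ⟨Sum.inl (Sum.inr i), Or.inr ⟨i, rfl, hi⟩, hiN⟩
    · rintro j (⟨i, h, _⟩ | ⟨i, h, _⟩) <;> exact Sum.inr_ne_inl h
  · rintro ⟨S, ⟨hind, hmax⟩, hdisj⟩
    classical
    refine ⟨fun i => if Sum.inl (Sum.inl i) ∈ S then true else false, fun j => ?_⟩
    rcases hmax (Sum.inr j) (hdisj j) with ⟨u, huS, hadj⟩
    match u with
    | Sum.inl (Sum.inl i) =>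
      exact Or.inl ⟨i, hadj, by simp [huS]⟩
    | Sum.inl (Sum.inr i) =>
      refine Or.inr ⟨i, hadj, ?_⟩
      have : Sum.inl (Sum.inl i) ∉ S := fun h =>
        hind _ h _ huS (show (cnfG n k P N).Adj _ _ from rfl)
      simp [this]
    | Sum.inr j' => exact absurd huS (hdisj j')
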